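/- If a twice continuously differentiable function f: ℝ^{n×n} → ℝ satisfies δ-RIP_{2r,4r}, then it satisfies 2δ-BDP_{2r}; that is, |[∇²f(M) - ∇²f(M')](K,L)| ≤ 2δ‖K‖_F‖L‖_F for all matrices M, M', K, L of rank at most 2r. -/

import Mathlib

noncomputable def frob {m n : Type*} [Fintype m] [Fintype n] (A : Matrix m n ℝ) : ℝ :=
  Real.sqrt (∑ i, ∑ j, (A i j)^2)

attribute [local instance] Matrix.normedAddCommGroup Matrix.normedSpace

/-- The Hessian of `f` at `M`, as a bilinear form applied to `(K, L)`. -/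
noncomputable def Hess {n : ℕ} (f : Matrix (Fin n) (Fin n) ℝ → ℝ)
    (M K L : Matrix (Fin n) (Fin n) ℝ) : ℝ :=
  iteratedFDeriv ℝ 2 f M ![K, L]

lemma frob_nonneg {m n : Type*} [Fintype m] [Fintype n] (A : Matrix m n ℝ) : 0 ≤ frob A :=
  Real.sqrt_nonneg _

lemma frob_sq {m n : Type*} [Fintype m] [Fintype n] (A : Matrix m n ℝ) :
    frob A ^ 2 = ∑ i, ∑ j, (A i j)^2 := by
  rw [frob, Real.sq_sqrt]
  positivity

lemma frob_eq_zero {m n : Type*} [Fintype m] [Fintype n] {A : Matrix m n ℝ}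
    (h : frob A = 0) : A = 0 := by
  have h2 : frob A ^ 2 = 0 := by rw [h]; ring
  rw [frob_sq] at h2
  ext i j
  have := (Finset.sum_eq_zero_iff_of_nonneg (fun i _ => Finset.sum_nonneg
    (fun j _ => sq_nonneg (A i j)))).mp h2 i (Finset.mem_univ i)
  have := (Finset.sum_eq_zero_iff_of_nonneg (fun j _ => sq_nonneg (A i j))).mp this
    j (Finset.mem_univ j)
  simpa [pow_eq_zero_iff] using this

lemma frob_smul {m n : Type*} [Fintype m] [Fintype n] (c : ℝ) (A : Matrix m n ℝ) :
    frob (c • A) = |c| * frob A := by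
  unfold frob
  simp only [Matrix.smul_apply, smul_eq_mul, mul_pow, ← Finset.mul_sum]
  rw [Real.sqrt_mul (sq_nonneg c), Real.sqrt_sq_eq_abs]

lemma frob_parallelogram {m n : Type*} [Fintype m] [Fintype n] (A B : Matrix m n ℝ) :
    frob (A + B) ^ 2 + frob (A - B) ^ 2 = 2 * frob A ^ 2 + 2 * frob B ^ 2 := by
  simp only [frob_sq, Finset.mul_sum, ← Finset.sum_add_distrib]
  refine Finset.sum_congr rfl fun i _ => ?_
  refine Finset.sum_congr rfl fun j _ => ?_
  simp only [Matrix.add_apply, Matrix.sub_apply]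
  ring

lemma matrix_rank_add_le {n : ℕ} (A B : Matrix (Fin n) (Fin n) ℝ) :
    (A + B).rank ≤ A.rank + B.rank := by
  have h : LinearMap.range (A + B).mulVecLin ≤
      LinearMap.range A.mulVecLin ⊔ LinearMap.range B.mulVecLin := by
    rw [Matrix.mulVecLin_add]
    rintro x ⟨y, rfl⟩
    exact Submodule.add_mem_sup (LinearMap.mem_range_self _ y) (LinearMap.mem_range_self _ y)
  exact (Submodule.finrank_mono h).trans
    (Submodule.finrank_add_le_finrank_add_finrank _ _)

lemma matrix_rank_smul_le {n : ℕ} (c : ℝ) (A : Matrix (Fin n) (Fin n) ℝ) :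
    (c • A).rank ≤ A.rank := by
  rcases eq_or_ne c 0 with rfl | hc
  · simp [Matrix.rank_zero]
  · have h : (c • A).mulVecLin = c • A.mulVecLin := by
      ext v
      simp [Matrix.mulVecLin, Matrix.smul_mulVec]
    rw [Matrix.rank, h, LinearMap.range_smul _ _ hc, Matrix.rank]

theorem stmt_3 {n r : ℕ} (δ : ℝ) (hδ0 : 0 ≤ δ) (hδ1 : δ < 1)
    (f : Matrix (Fin n) (Fin n) ℝ → ℝ) (hf : ContDiff ℝ 2 f)
    (hRIP : ∀ M K : Matrix (Fin n) (Fin n) ℝ, M.rank ≤ 2 * r → K.rank ≤ 4 * r →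
      (1 - δ) * frob K ^ 2 ≤ Hess f M K K ∧ Hess f M K K ≤ (1 + δ) * frob K ^ 2)
    (M M' K L : Matrix (Fin n) (Fin n) ℝ)
    (hM : M.rank ≤ 2 * r) (hM' : M'.rank ≤ 2 * r)
    (hK : K.rank ≤ 2 * r) (hL : L.rank ≤ 2 * r) :
    |Hess f M K L - Hess f M' K L| ≤ 2 * δ * frob K * frob L := by
  classical
  have heq : ∀ N A B : Matrix (Fin n) (Fin n) ℝ,
      Hess f N A B = fderiv ℝ (fderiv ℝ f) N A B := by
    intro N A B
    rw [Hess, iteratedFDeriv_two_apply]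
    simp
    rfl
  have hsymm : ∀ N A B : Matrix (Fin n) (Fin n) ℝ,
      Hess f N A B = Hess f N B A := by
    intro N A B
    rw [heq, heq]
    exact (hf.contDiffAt.isSymmSndFDerivAt (by simp)) A B
  -- zero cases
  rcases eq_or_ne (frob K) 0 with hK0 | hK0
  · have : K = 0 := frob_eq_zero hK0
    subst this
    have hz : ∀ N : Matrix (Fin n) (Fin n) ℝ, Hess f N 0 L = 0 := by
      intro N; rw [heq]; simp
    rw [hz, hz, sub_zero, abs_zero, hK0]
    have := frob_nonneg L
    nlinarith
  rcases eq_or_ne (frob L) 0 with hL0 | hL0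
  · have : L = 0 := frob_eq_zero hL0
    subst this
    have hz : ∀ N : Matrix (Fin n) (Fin n) ℝ, Hess f N K 0 = 0 := by
      intro N; rw [heq]; simp
    rw [hz, hz, sub_zero, abs_zero, hL0]
    have := frob_nonneg K
    nlinarith
  have haK : 0 < frob K := lt_of_le_of_ne (frob_nonneg K) (Ne.symm hK0)
  have haL : 0 < frob L := lt_of_le_of_ne (frob_nonneg L) (Ne.symm hL0)
  set a := frob K with ha
  set b := frob L with hb
  set K' := a⁻¹ • K with hK'
  set L' := b⁻¹ • L with hL'
  have hfK' : frob K' = 1 := by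
    rw [hK', frob_smul, abs_inv, abs_of_pos haK, inv_mul_cancel₀ (ne_of_gt haK)]
  have hfL' : frob L' = 1 := by
    rw [hL', frob_smul, abs_inv, abs_of_pos haL, inv_mul_cancel₀ (ne_of_gt haL)]
  have hrK' : K'.rank ≤ 2 * r := le_trans (matrix_rank_smul_le _ _) hK
  have hrL' : L'.rank ≤ 2 * r := le_trans (matrix_rank_smul_le _ _) hL
  -- key estimate on diagonal
  have key : ∀ A : Matrix (Fin n) (Fin n) ℝ, A.rank ≤ 4 * r →
      |Hess f M A A - Hess f M' A A| ≤ 2 * δ * frob A ^ 2 := by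
    intro A hA
    obtain ⟨h1, h2⟩ := hRIP M A hM hA
    obtain ⟨h3, h4⟩ := hRIP M' A hM' hA
    rw [abs_sub_le_iff]
    constructor <;> nlinarith
  have hr4 : (K' + L').rank ≤ 4 * r := by
    have := matrix_rank_add_le K' L'
    omega
  have hr4' : (K' - L').rank ≤ 4 * r := by
    have h1 : (K' - L') = K' + (-1 : ℝ) • L' := by ext i j; simp; ring
    have h2 := matrix_rank_add_le K' ((-1 : ℝ) • L')
    have h3 := matrix_rank_smul_le (-1 : ℝ) L'
    rw [h1]
    omega
  have kp := key _ hr4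
  have km := key _ hr4'
  have hpar := frob_parallelogram K' L'
  -- polarization expansion
  have expand : ∀ N A B : Matrix (Fin n) (Fin n) ℝ,
      Hess f N (A + B) (A + B) - Hess f N (A - B) (A - B)
        = 2 * (Hess f N A B + Hess f N B A) := by
    intro N A B
    simp only [heq, map_add, map_sub, ContinuousLinearMap.add_apply,
      ContinuousLinearMap.sub_apply]
    ring
  have hpol : Hess f M K' L' - Hess f M' K' L'
      = ((Hess f M (K' + L') (K' + L') - Hess f M' (K' + L') (K' + L'))
        - (Hess f M (K' - L') (K' - L') - Hess f M' (K' - L') (K' - L'))) / 4 := by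
    have e1 := expand M K' L'
    have e2 := expand M' K' L'
    have s1 := hsymm M K' L'
    have s2 := hsymm M' K' L'
    linarith
  have hunit : |Hess f M K' L' - Hess f M' K' L'| ≤ 2 * δ := by
    rw [hpol]
    rw [abs_div]
    have habs : |Hess f M (K' + L') (K' + L') - Hess f M' (K' + L') (K' + L')
        - (Hess f M (K' - L') (K' - L') - Hess f M' (K' - L') (K' - L'))|
        ≤ 2 * δ * frob (K' + L') ^ 2 + 2 * δ * frob (K' - L') ^ 2 :=
      (abs_sub _ _).trans (add_le_add kp km)
    have : 2 * δ * frob (K' + L') ^ 2 + 2 * δ * frob (K' - L') ^ 2 = 8 * δ := by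
      have h1 : frob (K' + L') ^ 2 + frob (K' - L') ^ 2 = 4 := by
        rw [hpar, hfK', hfL']; ring
      nlinarith
    rw [abs_of_pos (by norm_num : (0:ℝ) < 4)]
    linarith [this ▸ habs]
  -- scaling back
  have hscale : ∀ N : Matrix (Fin n) (Fin n) ℝ,
      Hess f N K L = a * b * Hess f N K' L' := by
    intro N
    have hKeq : K = a • K' := by
      rw [hK', smul_smul, mul_inv_cancel₀ (ne_of_gt haK), one_smul]
    have hLeq : L = b • L' := by
      rw [hL', smul_smul, mul_inv_cancel₀ (ne_of_gt haL), one_smul]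
    rw [heq, heq]
    conv_lhs => rw [hKeq, hLeq]
    simp only [map_smul, ContinuousLinearMap.smul_apply, smul_eq_mul]
    ring
  rw [hscale M, hscale M']
  have : a * b * Hess f M K' L' - a * b * Hess f M' K' L'
      = a * b * (Hess f M K' L' - Hess f M' K' L') := by ring
  rw [this, abs_mul, abs_of_pos (mul_pos haK haL)]
  calc a * b * |Hess f M K' L' - Hess f M' K' L'|
      ≤ a * b * (2 * δ) := by
        exact mul_le_mul_of_nonneg_left hunit (le_of_lt (mul_pos haK haL))
    _ = 2 * δ * a * b := by ring
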